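/- arXiv:math/0002133 — 6 statements merged into one kernel-verified Lean document; each statement's English description precedes it below -/
import Mathlib

section
/- Let Δx > 0, x_j ∈ ℝ, x_{j±1/2} := x_j ± Δx/2, x_{j±1} := x_j ± Δx, and let P_i(x) = A_i + B_i(x − x_i) + (1/2)C_i(x − x_i)² for i ∈ {j−1, j, j+1} be quadratic polynomials. Let a₋, a₊ > 0, let f : ℝ → ℝ, and set u⁻_{j+1/2} := P_j(x_{j+1/2}), u⁺_{j+1/2} := P_{j+1}(x_{j+1/2}), u⁻_{j−1/2} := P_{j−1}(x_{j−1/2}), u⁺_{j−1/2} := P_j(x_{j−1/2}), and ū_j := A_j + (Δx²/24)C_j. Suppose F_{j+1/2,r}, F_{j+1/2,l}, F_{j−1/2,r}, F_{j−1/2,l} : (0, δ₀) → ℝ satisfy F_{j+1/2,r}(Δt)/Δt → f(u⁺_{j+1/2}), F_{j+1/2,l}(Δt)/Δt → f(u⁻_{j+1/2}), F_{j−1/2,r}(Δt)/Δt → f(u⁺_{j−1/2}), F_{j−1/2,l}(Δt)/Δt → f(u⁻_{j−1/2}) as Δt → 0⁺, and that B̃₋, B̃₊, C̃₋, C̃₊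 : (0, δ₀) → ℝ are bounded. Define, for Δt ∈ (0, δ₀) with Δt(a₋ + a₊) < Δx and λ := Δt/Δx: w̄_{j+1/2}(Δt) := (A_j + A_{j+1})/2 + ((Δx − a₊Δt)/4)(B_j − B_{j+1}) + (Δx²/16 − a₊ΔtΔx/8 + (a₊Δt)²/12)(C_j + C_{j+1}) − (1/(2a₊Δt))(F_{j+1/2,r}(Δt) − F_{j+1/2,l}(Δt)); w̄_{j−1/2}(Δt) := (A_{j−1} + A_j)/2 + ((Δx − a₋Δt)/4)(B_{j−1} − B_j) + (Δx²/16 − a₋ΔtΔx/8 + (a₋Δt)²/12)(C_{j−1} + C_j) − (1/(2a₋Δt))(F_{j−1/2,r}(Δt) − F_{j−1/2,l}(Δt)); w̄_j(Δt) := A_j + (Δt/2)(a₋ − a₊)B_j + [Δx²/24 − ΔtΔx(a₋ + a₊)/12 + Δt²(a₋² − a₋a₊ + a₊²)/6]C_j − (1/(Δx − Δt(a₋ + a₊)))(F_{j+1/2,l}(Δt) − F_{j−1/2,r}(Δt)); and ū^{new}(Δt) := λa₋ w̄_{j−1/2}(Δt) + (1 − λ(a₋ + a₊)) w̄_j(Δt)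 + λa₊ w̄_{j+1/2}(Δt) + (λΔt/2)(a₋² B̃₋(Δt) − a₊² B̃₊(Δt)) + (λΔt²/6)(a₋³ C̃₋(Δt) + a₊³ C̃₊(Δt)). Then lim_{Δt→0⁺} (ū^{new}(Δt) − ū_j)/Δt = −(H₊ − H₋)/Δx, where H₊ := (f(u⁺_{j+1/2}) + f(u⁻_{j+1/2}))/2 − (a₊/2)(u⁺_{j+1/2} − u⁻_{j+1/2}) and H₋ := (f(u⁺_{j−1/2}) + f(u⁻_{j−1/2}))/2 − (a₋/2)(u⁺_{j−1/2} − u⁻_{j−1/2}). -/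
open Filter Topology

set_option maxHeartbeats 1600000

/-- Derivation of the third-order semi-discrete central scheme as the
`Δt → 0⁺` limit of the fully-discrete scheme.  Here `Pm, Pj, Pp` are the
parabolic reconstructions in cells `j−1, j, j+1`; `Fpr, Fpl, Fmr, Fml` are the
time-integrals of the fluxes at the Riemann-fan edges, whose difference
quotients converge to the point flux values at the interfaces; `Btm, Btp, Ctm,
Ctp` are the (bounded) higher coefficients of the new reconstruction; `wp, wm,
wj` are the evolved averages over the Riemann-fan and smooth control volumes;
and `unew` is the projected new cell average.  The limit of
`(ū^{new}(Δt) − ū_j)/Δt` is `−(H₊ − H₋)/Δx` with the semi-discrete numerical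
fluxes `H±`. -/
theorem stmt_0 (Δx xj : ℝ) (hΔx : 0 < Δx)
    (Am Bm Cm Aj Bj Cj Ap Bp Cp : ℝ)
    (am ap : ℝ) (ham : 0 < am) (hap : 0 < ap)
    (f : ℝ → ℝ)
    (Pm Pj Pp : ℝ → ℝ)
    (hPm : ∀ x, Pm x = Am + Bm * (x - (xj - Δx)) + (1 / 2) * Cm * (x - (xj - Δx)) ^ 2)
    (hPj : ∀ x, Pj x = Aj + Bj * (x - xj) + (1 / 2) * Cj * (x - xj) ^ 2)
    (hPp : ∀ x, Pp x = Ap + Bp * (x - (xj + Δx)) + (1 / 2) * Cp * (x - (xj + Δx)) ^ 2)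
    (δ₀ : ℝ) (hδ₀ : 0 < δ₀)
    (Fpr Fpl Fmr Fml Btm Btp Ctm Ctp : ℝ → ℝ)
    (hFpr : Tendsto (fun Δt => Fpr Δt / Δt) (𝓝[>] 0) (𝓝 (f (Pp (xj + Δx / 2)))))
    (hFpl : Tendsto (fun Δt => Fpl Δt / Δt) (𝓝[>] 0) (𝓝 (f (Pj (xj + Δx / 2)))))
    (hFmr : Tendsto (fun Δt => Fmr Δt / Δt) (𝓝[>] 0) (𝓝 (f (Pj (xj - Δx / 2)))))
    (hFml : Tendsto (fun Δt => Fml Δt / Δt) (𝓝[>] 0) (𝓝 (f (Pm (xj - Δx / 2)))))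
    (hbdd : ∃ M : ℝ, ∀ Δt ∈ Set.Ioo (0 : ℝ) δ₀,
      |Btm Δt| ≤ M ∧ |Btp Δt| ≤ M ∧ |Ctm Δt| ≤ M ∧ |Ctp Δt| ≤ M)
    (wp wm wj unew : ℝ → ℝ)
    (hwp : ∀ Δt ∈ Set.Ioo (0 : ℝ) δ₀, Δt * (am + ap) < Δx →
      wp Δt = (Aj + Ap) / 2 + ((Δx - ap * Δt) / 4) * (Bj - Bp)
        + (Δx ^ 2 / 16 - ap * Δt * Δx / 8 + (ap * Δt) ^ 2 / 12) * (Cj + Cp)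
        - (1 / (2 * ap * Δt)) * (Fpr Δt - Fpl Δt))
    (hwm : ∀ Δt ∈ Set.Ioo (0 : ℝ) δ₀, Δt * (am + ap) < Δx →
      wm Δt = (Am + Aj) / 2 + ((Δx - am * Δt) / 4) * (Bm - Bj)
        + (Δx ^ 2 / 16 - am * Δt * Δx / 8 + (am * Δt) ^ 2 / 12) * (Cm + Cj)
        - (1 / (2 * am * Δt)) * (Fmr Δt - Fml Δt))
    (hwj : ∀ Δt ∈ Set.Ioo (0 : ℝ) δ₀, Δt * (am + ap) < Δx →
      wj Δt = Aj + (Δt / 2) * (am - ap) * Bj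
        + (Δx ^ 2 / 24 - Δt * Δx * (am + ap) / 12
            + Δt ^ 2 * (am ^ 2 - am * ap + ap ^ 2) / 6) * Cj
        - (1 / (Δx - Δt * (am + ap))) * (Fpl Δt - Fmr Δt))
    (hunew : ∀ Δt ∈ Set.Ioo (0 : ℝ) δ₀, Δt * (am + ap) < Δx →
      unew Δt = (Δt / Δx) * am * wm Δt + (1 - (Δt / Δx) * (am + ap)) * wj Δt
        + (Δt / Δx) * ap * wp Δt
        + ((Δt / Δx) * Δt / 2) * (am ^ 2 * Btm Δt - ap ^ 2 * Btp Δt)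
        + ((Δt / Δx) * Δt ^ 2 / 6) * (am ^ 3 * Ctm Δt + ap ^ 3 * Ctp Δt)) :
    Tendsto (fun Δt => (unew Δt - (Aj + (Δx ^ 2 / 24) * Cj)) / Δt) (𝓝[>] 0)
      (𝓝 (-(((f (Pp (xj + Δx / 2)) + f (Pj (xj + Δx / 2))) / 2
              - (ap / 2) * (Pp (xj + Δx / 2) - Pj (xj + Δx / 2)))
            - ((f (Pj (xj - Δx / 2)) + f (Pm (xj - Δx / 2))) / 2
              - (am / 2) * (Pj (xj - Δx / 2) - Pm (xj - Δx / 2)))) / Δx)) :=  by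
  classical
  obtain ⟨M, hM⟩ := hbdd
  have hΔx' : Δx ≠ 0 := ne_of_gt hΔx
  have hs : 0 < am + ap := by linarith
  set δ : ℝ := min δ₀ (Δx / (am + ap)) with hδdef
  have hδpos : 0 < δ := lt_min hδ₀ (div_pos hΔx hs)
  have hmemIoo : Set.Ioo (0:ℝ) δ ∈ 𝓝[>] (0:ℝ) :=
    Ioo_mem_nhdsGT_of_mem ⟨le_refl _, hδpos⟩
  -- limits of the flux difference quotients, scaled
  have hf1 : Tendsto (fun Δt => (1/(2*Δx)) * (Fmr Δt/Δt - Fml Δt/Δt)) (𝓝[>] (0:ℝ))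
      (𝓝 ((1/(2*Δx)) * (f (Pj (xj - Δx / 2)) - f (Pm (xj - Δx / 2))))) :=
    (hFmr.sub hFml).const_mul _
  have hf2 : Tendsto (fun Δt => (1/(2*Δx)) * (Fpr Δt/Δt - Fpl Δt/Δt)) (𝓝[>] (0:ℝ))
      (𝓝 ((1/(2*Δx)) * (f (Pp (xj + Δx / 2)) - f (Pj (xj + Δx / 2))))) :=
    (hFpr.sub hFpl).const_mul _
  have hf3 : Tendsto (fun Δt => (1/Δx) * (Fpl Δt/Δt - Fmr Δt/Δt)) (𝓝[>] (0:ℝ))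
      (𝓝 ((1/Δx) * (f (Pj (xj + Δx / 2)) - f (Pj (xj - Δx / 2))))) :=
    (hFpl.sub hFmr).const_mul _
  -- the smooth (polynomial-in-Δt) part
  have hP : Tendsto (fun Δt : ℝ =>
      (am/Δx) * ((Am+Aj)/2 + ((Δx-am*Δt)/4)*(Bm-Bj)
        + (Δx^2/16 - am*Δt*Δx/8 + (am*Δt)^2/12)*(Cm+Cj))
      + (ap/Δx) * ((Aj+Ap)/2 + ((Δx-ap*Δt)/4)*(Bj-Bp)
        + (Δx^2/16 - ap*Δt*Δx/8 + (ap*Δt)^2/12)*(Cj+Cp))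
      + (1/2)*(am-ap)*Bj + (-(Δx*(am+ap))/12 + Δt*(am^2-am*ap+ap^2)/6)*Cj
      - ((am+ap)/Δx) * (Aj + (Δt/2)*(am-ap)*Bj
        + (Δx^2/24 - Δt*Δx*(am+ap)/12 + Δt^2*(am^2-am*ap+ap^2)/6)*Cj)) (𝓝[>] (0:ℝ))
      (𝓝 ((am/Δx) * ((Am+Aj)/2 + (Δx/4)*(Bm-Bj) + (Δx^2/16)*(Cm+Cj))
      + (ap/Δx) * ((Aj+Ap)/2 + (Δx/4)*(Bj-Bp) + (Δx^2/16)*(Cj+Cp))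
      + (1/2)*(am-ap)*Bj + (-(Δx*(am+ap))/12)*Cj
      - ((am+ap)/Δx) * (Aj + Δx^2/24*Cj))) := by
    apply Tendsto.mono_left _ nhdsWithin_le_nhds
    apply Continuous.tendsto' (by fun_prop) 0 _ (by norm_num)
  -- the bounded remainder terms tend to 0
  have hMnn : 0 ≤ M := le_trans (abs_nonneg _) (hM (δ₀/2) ⟨by linarith, by linarith⟩).1
  have hB : Tendsto (fun Δt : ℝ => (Δt/(2*Δx))*(am^2*Btm Δt - ap^2*Btp Δt)) (𝓝[>] (0:ℝ))
      (𝓝 0) := by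
    apply squeeze_zero_norm' (a := fun Δt : ℝ => (Δt/(2*Δx))*(am^2*M + ap^2*M))
    · filter_upwards [Ioo_mem_nhdsGT_of_mem (by exact ⟨le_refl _, hδ₀⟩ : (0:ℝ) ∈ Set.Ico 0 δ₀)]
        with t ht
      have h1 := (hM t ht).1
      have h2 := (hM t ht).2.1
      rw [Real.norm_eq_abs, abs_mul, abs_of_pos (div_pos ht.1 (by positivity) : (0:ℝ) < t/(2*Δx))]
      have : |am^2*Btm t - ap^2*Btp t| ≤ am^2*M + ap^2*M := by
        calc |am^2*Btm t - ap^2*Btp t| ≤ |am^2*Btm t| + |ap^2*Btp t| := abs_sub _ _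
          _ = am^2*|Btm t| + ap^2*|Btp t| := by
              rw [abs_mul, abs_mul, abs_of_nonneg (by positivity : (0:ℝ) ≤ am^2),
                abs_of_nonneg (by positivity : (0:ℝ) ≤ ap^2)]
          _ ≤ am^2*M + ap^2*M := by gcongr
      exact mul_le_mul_of_nonneg_left this (le_of_lt (div_pos ht.1 (by positivity)))
    · apply Tendsto.mono_left _ nhdsWithin_le_nhds
      apply Continuous.tendsto' (by fun_prop) 0 _ (by norm_num)
  have hC : Tendsto (fun Δt : ℝ => (Δt^2/(6*Δx))*(am^3*Ctm Δt + ap^3*Ctp Δt)) (𝓝[>] (0:ℝ))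
      (𝓝 0) := by
    apply squeeze_zero_norm' (a := fun Δt : ℝ => (Δt^2/(6*Δx))*(am^3*M + ap^3*M))
    · filter_upwards [Ioo_mem_nhdsGT_of_mem (by exact ⟨le_refl _, hδ₀⟩ : (0:ℝ) ∈ Set.Ico 0 δ₀)]
        with t ht
      have h1 := (hM t ht).2.2.1
      have h2 := (hM t ht).2.2.2
      rw [Real.norm_eq_abs, abs_mul, abs_of_pos (div_pos (pow_pos ht.1 2) (by positivity) : (0:ℝ) < t^2/(6*Δx))]
      have : |am^3*Ctm t + ap^3*Ctp t| ≤ am^3*M + ap^3*M := by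
        calc |am^3*Ctm t + ap^3*Ctp t| ≤ |am^3*Ctm t| + |ap^3*Ctp t| := abs_add_le _ _
          _ = am^3*|Ctm t| + ap^3*|Ctp t| := by
              rw [abs_mul, abs_mul, abs_of_nonneg (by positivity : (0:ℝ) ≤ am^3),
                abs_of_nonneg (by positivity : (0:ℝ) ≤ ap^3)]
          _ ≤ am^3*M + ap^3*M := by gcongr
      exact mul_le_mul_of_nonneg_left this (le_of_lt (div_pos (pow_pos ht.1 2) (by positivity)))
    · apply Tendsto.mono_left _ nhdsWithin_le_nhds
      apply Continuous.tendsto' (by fun_prop) 0 _ (by norm_num)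
  have main := ((((hP.sub hf1).sub hf2).sub hf3).add hB).add hC
  have heq : (fun Δt : ℝ =>
      (am/Δx) * ((Am+Aj)/2 + ((Δx-am*Δt)/4)*(Bm-Bj)
        + (Δx^2/16 - am*Δt*Δx/8 + (am*Δt)^2/12)*(Cm+Cj))
      + (ap/Δx) * ((Aj+Ap)/2 + ((Δx-ap*Δt)/4)*(Bj-Bp)
        + (Δx^2/16 - ap*Δt*Δx/8 + (ap*Δt)^2/12)*(Cj+Cp))
      + (1/2)*(am-ap)*Bj + (-(Δx*(am+ap))/12 + Δt*(am^2-am*ap+ap^2)/6)*Cj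
      - ((am+ap)/Δx) * (Aj + (Δt/2)*(am-ap)*Bj
        + (Δx^2/24 - Δt*Δx*(am+ap)/12 + Δt^2*(am^2-am*ap+ap^2)/6)*Cj)
      - (1/(2*Δx)) * (Fmr Δt/Δt - Fml Δt/Δt)
      - (1/(2*Δx)) * (Fpr Δt/Δt - Fpl Δt/Δt)
      - (1/Δx) * (Fpl Δt/Δt - Fmr Δt/Δt)
      + (Δt/(2*Δx))*(am^2*Btm Δt - ap^2*Btp Δt)
      + (Δt^2/(6*Δx))*(am^3*Ctm Δt + ap^3*Ctp Δt))
      =ᶠ[𝓝[>] (0:ℝ)]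
      (fun Δt => (unew Δt - (Aj + (Δx ^ 2 / 24) * Cj)) / Δt) := by
    filter_upwards [hmemIoo] with t ht
    have ht0 : 0 < t := ht.1
    have htδ₀ : t ∈ Set.Ioo (0:ℝ) δ₀ := ⟨ht0, lt_of_lt_of_le ht.2 (min_le_left _ _)⟩
    have htlt : t * (am + ap) < Δx := by
      have := lt_of_lt_of_le ht.2 (min_le_right _ _)
      calc t * (am + ap) < (Δx / (am + ap)) * (am + ap) := by
            exact mul_lt_mul_of_pos_right this hs
        _ = Δx := div_mul_cancel₀ _ (ne_of_gt hs)
    have hD : Δx - t * (am + ap) ≠ 0 := ne_of_gt (by linarith)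
    rw [hunew t htδ₀ htlt, hwm t htδ₀ htlt, hwj t htδ₀ htlt, hwp t htδ₀ htlt]
    field_simp [ht0.ne', hΔx', ham.ne', hap.ne', hD]
    ring
  have main2 := main.congr' heq
  convert main2 using 2
  rw [hPm, hPj, hPj, hPp]
  field_simp
  ring
end

section
/- Let Δx > 0, x_j ∈ ℝ, x_{j±1} := x_j ± Δx, and let ū_{j−1}, ū_j, ū_{j+1} ∈ ℝ. Then there is exactly one polynomial P of degree at most 2 satisfying (1/Δx)∫_{x_i−Δx/2}^{x_i+Δx/2} P(x) dx = ū_i for i ∈ {j−1, j, j+1}, namely P_EXACT(x) = u_j + u_j′(x − x_j) + (1/2)u_j″(x − x_j)², where u_j := ū_j − (1/24)(ū_{j+1} − 2ū_j + ū_{j−1}), u_j′ := (ū_{j+1} − ū_{j−1})/(2Δx), and u_j″ := (ū_{j+1} − 2ū_j + ū_{j−1})/Δx². -/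
open MeasureTheory intervalIntegral Polynomial

lemma quad_int (a b c l u : ℝ) :
    ∫ x in l..u, (a + b*x + c*x^2) =
      a*(u-l) + b*(u^2-l^2)/2 + c*(u^3-l^3)/3 := by
  have h1 : IntervalIntegrable (fun x : ℝ => a + b*x) volume l u :=
    (Continuous.intervalIntegrable (by continuity) l u)
  have h2 : IntervalIntegrable (fun x : ℝ => c*x^2) volume l u :=
    (Continuous.intervalIntegrable (by continuity) l u)
  have h3 : IntervalIntegrable (fun x : ℝ => (a:ℝ)) volume l u :=
    (Continuous.intervalIntegrable (by continuity) l u)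
  have h4 : IntervalIntegrable (fun x : ℝ => b*x) volume l u :=
    (Continuous.intervalIntegrable (by continuity) l u)
  rw [intervalIntegral.integral_add h1 h2, intervalIntegral.integral_add h3 h4,
    intervalIntegral.integral_const, intervalIntegral.integral_const_mul,
    intervalIntegral.integral_const_mul, integral_id, integral_pow]
  simp [smul_eq_mul]
  ring

lemma eval_quad (P : Polynomial ℝ) (h : P.degree ≤ 2) (x : ℝ) :
    P.eval x = P.coeff 0 + P.coeff 1 * x + P.coeff 2 * x^2 := by
  have hn : P.natDegree < 3 := Nat.lt_succ_of_le (natDegree_le_iff_degree_le.mpr h)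
  rw [Polynomial.eval_eq_sum_range' hn]
  simp [Finset.sum_range_succ]

lemma avg_quad (P : Polynomial ℝ) (h : P.degree ≤ 2) (Δx t : ℝ) (hΔx : Δx ≠ 0) :
    (1 / Δx) * (∫ x in (t - Δx/2)..(t + Δx/2), P.eval x) =
      P.coeff 0 + P.coeff 1 * t + P.coeff 2 * (t^2 + Δx^2/12) := by
  have : ∀ x : ℝ, P.eval x = P.coeff 0 + P.coeff 1 * x + P.coeff 2 * x^2 :=
    eval_quad P h
  rw [intervalIntegral.integral_congr (fun x _ => this x), quad_int]
  field_simp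
  ring

/-- There is exactly one polynomial of degree at most 2 conserving the three
cell averages `ū_{j−1}, ū_j, ū_{j+1}` on a uniform grid, namely
`P_EXACT(x) = u_j + u_j′ (x − x_j) + (1/2) u_j″ (x − x_j)²` with
`u_j = ū_j − (ū_{j+1} − 2ū_j + ū_{j−1})/24`, `u_j′ = (ū_{j+1} − ū_{j−1})/(2Δx)`,
`u_j″ = (ū_{j+1} − 2ū_j + ū_{j−1})/Δx²`. -/
theorem stmt_4 (Δx xj ubm ub ubp : ℝ) (hΔx : 0 < Δx) :
    (∃! P : Polynomial ℝ, P.degree ≤ 2 ∧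
      (1 / Δx) * (∫ x in ((xj - Δx) - Δx / 2)..((xj - Δx) + Δx / 2), P.eval x) = ubm ∧
      (1 / Δx) * (∫ x in (xj - Δx / 2)..(xj + Δx / 2), P.eval x) = ub ∧
      (1 / Δx) * (∫ x in ((xj + Δx) - Δx / 2)..((xj + Δx) + Δx / 2), P.eval x) = ubp) ∧
    (∀ P : Polynomial ℝ, P.degree ≤ 2 →
      (1 / Δx) * (∫ x in ((xj - Δx) - Δx / 2)..((xj - Δx) + Δx / 2), P.eval x) = ubm →
      (1 / Δx) * (∫ x in (xj - Δx / 2)..(xj + Δx / 2), P.eval x) = ub →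
      (1 / Δx) * (∫ x in ((xj + Δx) - Δx / 2)..((xj + Δx) + Δx / 2), P.eval x) = ubp →
      ∀ x : ℝ, P.eval x =
        (ub - (1 / 24) * (ubp - 2 * ub + ubm))
          + ((ubp - ubm) / (2 * Δx)) * (x - xj)
          + (1 / 2) * ((ubp - 2 * ub + ubm) / Δx ^ 2) * (x - xj) ^ 2) := by
  have hne : Δx ≠ 0 := ne_of_gt hΔx
  -- the uniqueness-of-values part
  have key : ∀ P : Polynomial ℝ, P.degree ≤ 2 →
      (1 / Δx) * (∫ x in ((xj - Δx) - Δx / 2)..((xj - Δx) + Δx / 2), P.eval x) = ubm →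
      (1 / Δx) * (∫ x in (xj - Δx / 2)..(xj + Δx / 2), P.eval x) = ub →
      (1 / Δx) * (∫ x in ((xj + Δx) - Δx / 2)..((xj + Δx) + Δx / 2), P.eval x) = ubp →
      ∀ x : ℝ, P.eval x =
        (ub - (1 / 24) * (ubp - 2 * ub + ubm))
          + ((ubp - ubm) / (2 * Δx)) * (x - xj)
          + (1 / 2) * ((ubp - 2 * ub + ubm) / Δx ^ 2) * (x - xj) ^ 2 := by
    intro P hdeg hA hB hC x
    rw [avg_quad P hdeg Δx (xj - Δx) hne] at hA
    rw [avg_quad P hdeg Δx xj hne] at hB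
    rw [avg_quad P hdeg Δx (xj + Δx) hne] at hC
    have h1 : 2 * P.coeff 2 * Δx^2 = ubp - 2*ub + ubm := by linear_combination hC + hA - 2*hB
    have h2 : 2 * P.coeff 1 * Δx + 4 * P.coeff 2 * xj * Δx = ubp - ubm := by
      linear_combination hC - hA
    rw [eval_quad P hdeg x, ← h1, ← h2]
    have e1 : (2 * P.coeff 2 * Δx ^ 2) / Δx ^ 2 = 2 * P.coeff 2 := by field_simp
    have e2 : (2 * P.coeff 1 * Δx + 4 * P.coeff 2 * xj * Δx) / (2 * Δx)
        = P.coeff 1 + 2 * P.coeff 2 * xj := by field_simp; ring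
    rw [e1, e2]
    linear_combination hB
  refine ⟨?_, key⟩
  -- existence: the explicit polynomial
  set c₀ : ℝ := (ubp - 2*ub + ubm) / (2*Δx^2) with hc0
  set b₀ : ℝ := (ubp - ubm) / (2*Δx) - 2*c₀*xj with hb0
  set a₀ : ℝ := (ub - (1/24)*(ubp - 2*ub + ubm)) - ((ubp - ubm)/(2*Δx))*xj + c₀*xj^2 with ha0
  set Q : Polynomial ℝ := Polynomial.C a₀ + Polynomial.C b₀ * X + Polynomial.C c₀ * X^2 with hQ
  have hQdeg : Q.degree ≤ 2 := by
    apply (Polynomial.degree_add_le _ _).trans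
    simp only [sup_le_iff]
    constructor
    · apply (Polynomial.degree_add_le _ _).trans
      simp only [sup_le_iff]
      exact ⟨degree_C_le.trans (by norm_num), (degree_C_mul_X_le _).trans (by norm_num)⟩
    · exact degree_C_mul_X_pow_le 2 c₀
  have hco : Q.coeff 0 = a₀ ∧ Q.coeff 1 = b₀ ∧ Q.coeff 2 = c₀ := by
    refine ⟨?_, ?_, ?_⟩ <;> simp [hQ, coeff_add, coeff_C_mul, coeff_X, coeff_C]
  have havg : ∀ t : ℝ, (1 / Δx) * (∫ x in (t - Δx/2)..(t + Δx/2), Q.eval x) =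
      a₀ + b₀ * t + c₀ * (t^2 + Δx^2/12) := by
    intro t
    rw [avg_quad Q hQdeg Δx t hne, hco.1, hco.2.1, hco.2.2]
  have hvm : (1 / Δx) * (∫ x in ((xj - Δx) - Δx / 2)..((xj - Δx) + Δx / 2), Q.eval x) = ubm := by
    rw [havg (xj - Δx), ha0, hb0, hc0]; field_simp; ring
  have hv : (1 / Δx) * (∫ x in (xj - Δx / 2)..(xj + Δx / 2), Q.eval x) = ub := by
    rw [havg xj, ha0, hb0, hc0]; field_simp; ring
  have hvp : (1 / Δx) * (∫ x in ((xj + Δx) - Δx / 2)..((xj + Δx) + Δx / 2), Q.eval x) = ubp := by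
    rw [havg (xj + Δx), ha0, hb0, hc0]; field_simp; ring
  refine ⟨Q, ⟨hQdeg, hvm, hv, hvp⟩, ?_⟩
  rintro P ⟨hPdeg, hPm, hP0, hPp⟩
  apply Polynomial.funext
  intro x
  rw [key P hPdeg hPm hP0 hPp x, key Q hQdeg hvm hv hvp x]
end

section
/- Let Δx > 0, x_j ∈ ℝ, and ū_{j−1}, ū_j, ū_{j+1} ∈ ℝ. Define P_R(x) := ū_j + ((ū_{j+1} − ū_j)/Δx)(x − x_j), P_L(x) := ū_j + ((ū_j − ū_{j−1})/Δx)(x − x_j), P_C(x) := ū_j − (1/12)(ū_{j+1} − 2ū_j + ū_{j−1}) + ((ū_{j+1} − ū_{j−1})/(2Δx))(x − x_j) + ((ū_{j+1} − 2ū_j + ū_{j−1})/Δx²)(x − x_j)², and P_EXACT(x) := u_j + u_j′(x − x_j) + (1/2)u_j″(x − x_j)² with u_j := ū_j − (1/24)(ū_{j+1} − 2ū_j + ū_{j−1}), u_j′ := (ū_{j+1} − ū_{j−1})/(2Δx), u_j″ := (ū_{j+1} − 2ū_j + ū_{j−1})/Δx². Then for all x ∈ ℝ, P_EXACT(x) =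 (1/4)P_L(x) + (1/4)P_R(x) + (1/2)P_C(x). -/
/-- The exact parabola `P_EXACT` is the convex combination
`(1/4)P_L + (1/4)P_R + (1/2)P_C` of the one-sided linear reconstructions and the
centered parabola of the CWENO reconstruction (with `c_L = c_R = 1/4`). -/
theorem stmt_5 (Δx xj ubm ub ubp : ℝ) (hΔx : 0 < Δx)
    (PR PL PC PEXACT : ℝ → ℝ)
    (hPR : ∀ x, PR x = ub + ((ubp - ub) / Δx) * (x - xj))
    (hPL : ∀ x, PL x = ub + ((ub - ubm) / Δx) * (x - xj))
    (hPC : ∀ x, PC x = ub - (1 / 12) * (ubp - 2 * ub + ubm)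
      + ((ubp - ubm) / (2 * Δx)) * (x - xj)
      + ((ubp - 2 * ub + ubm) / Δx ^ 2) * (x - xj) ^ 2)
    (hPE : ∀ x, PEXACT x = (ub - (1 / 24) * (ubp - 2 * ub + ubm))
      + ((ubp - ubm) / (2 * Δx)) * (x - xj)
      + (1 / 2) * ((ubp - 2 * ub + ubm) / Δx ^ 2) * (x - xj) ^ 2) :
    ∀ x : ℝ, PEXACT x = (1 / 4) * PL x + (1 / 4) * PR x + (1 / 2) * PC x := by
  intro x
  rw [hPE, hPL, hPR, hPC]
  field_simp
  ring
end

section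
/- Let Δx > 0, x_j ∈ ℝ, x_{j±1/2} := x_j ± Δx/2, and ū_{j−1}, ū_j, ū_{j+1} ∈ ℝ. For a polynomial P define IS(P) := Σ_{l=1}^{2} ∫_{x_{j−1/2}}^{x_{j+1/2}} Δx^{2l−1} (P^{(l)}(x))² dx. Then for the centered parabola P_C(x) := ū_j − (1/12)(ū_{j+1} − 2ū_j + ū_{j−1}) + ((ū_{j+1} − ū_{j−1})/(2Δx))(x − x_j) + ((ū_{j+1} − 2ū_j + ū_{j−1})/Δx²)(x − x_j)², one has IS(P_C) = (13/3)(ū_{j+1} − 2ū_j + ū_{j−1})² + (1/4)(ū_{j+1} − ū_{j−1})². -/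
open MeasureTheory intervalIntegral

private lemma deriv_parabola (c0 a b xj : ℝ) :
    deriv (fun x : ℝ => c0 + a * (x - xj) + b * (x - xj) ^ 2)
      = fun x => a + 2 * b * (x - xj) := by
  funext x
  have h : HasDerivAt (fun x : ℝ => c0 + a * (x - xj) + b * (x - xj) ^ 2)
      (a + 2 * b * (x - xj)) x := by
    have hx : HasDerivAt (fun x : ℝ => x - xj) 1 x := (hasDerivAt_id x).sub_const xj
    have h1 : HasDerivAt (fun x : ℝ => c0 + a * (x - xj)) a x := by
      have h' : HasDerivAt (fun y : ℝ => c0 + a * (y - xj)) (0 + a * 1) x :=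
        (hasDerivAt_const x c0).add (hx.const_mul a)
      simpa using h'
    have h2 : HasDerivAt (fun x : ℝ => b * (x - xj) ^ 2) (2 * b * (x - xj)) x := by
      have := (hx.pow 2).const_mul b
      simpa [mul_comm, mul_assoc, mul_left_comm] using this
    exact h1.add h2
  exact h.deriv

private lemma deriv_linear (a b xj : ℝ) :
    deriv (fun x : ℝ => a + 2 * b * (x - xj)) = fun _ => 2 * b := by
  funext x
  have h : HasDerivAt (fun x : ℝ => a + 2 * b * (x - xj)) (2 * b) x := by
    have hx : HasDerivAt (fun x : ℝ => x - xj) 1 x := (hasDerivAt_id x).sub_const xj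
    have h' : HasDerivAt (fun y : ℝ => a + 2 * b * (y - xj)) (0 + 2 * b * 1) x :=
      (hasDerivAt_const x a).add (hx.const_mul (2 * b))
    simpa using h'
  exact h.deriv

private lemma integral_sq_linear (a b c : ℝ) :
    ∫ t in (-c)..c, (a + 2 * b * t) ^ 2
      = 2 * a ^ 2 * c + (8 / 3) * b ^ 2 * c ^ 3 := by
  have key : ∫ t in (-c)..c, (a + 2 * b * t) ^ 2
      = (fun t => a ^ 2 * t + 2 * a * b * t ^ 2 + (4 / 3) * b ^ 2 * t ^ 3) c
        - (fun t => a ^ 2 * t + 2 * a * b * t ^ 2 + (4 / 3) * b ^ 2 * t ^ 3) (-c) := by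
    apply intervalIntegral.integral_eq_sub_of_hasDerivAt
    · intro t ht
      have h1 : HasDerivAt (fun t : ℝ => a ^ 2 * t) (a ^ 2) t := by
        simpa using (hasDerivAt_id t).const_mul (a ^ 2)
      have h2 : HasDerivAt (fun t : ℝ => 2 * a * b * t ^ 2) (2 * a * b * (2 * t)) t := by
        simpa using ((hasDerivAt_pow 2 t)).const_mul (2 * a * b)
      have h3 : HasDerivAt (fun t : ℝ => (4 / 3) * b ^ 2 * t ^ 3)
          ((4 / 3) * b ^ 2 * (3 * t ^ 2)) t := by
        simpa using ((hasDerivAt_pow 3 t)).const_mul ((4 / 3) * b ^ 2)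
      have : HasDerivAt (fun t => a ^ 2 * t + 2 * a * b * t ^ 2 + (4 / 3) * b ^ 2 * t ^ 3)
          (a ^ 2 + 2 * a * b * (2 * t) + 4 / 3 * b ^ 2 * (3 * t ^ 2)) t := (h1.add h2).add h3
      exact this.congr_deriv (by ring)
    · apply Continuous.intervalIntegrable
      continuity
  rw [key]; ring

/-- The CWENO smoothness indicator of the centered parabola:
`IS(P_C) = (13/3)(ū_{j+1} − 2ū_j + ū_{j−1})² + (1/4)(ū_{j+1} − ū_{j−1})²`,
where `IS(P) = Σ_{l=1}^{2} ∫_{x_{j−1/2}}^{x_{j+1/2}} Δx^{2l−1} (P^{(l)}(x))² dx`. -/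
theorem stmt_7 (Δx xj ubm ub ubp : ℝ) (hΔx : 0 < Δx)
    (PC : ℝ → ℝ)
    (hPC : ∀ x, PC x = ub - (1 / 12) * (ubp - 2 * ub + ubm)
      + ((ubp - ubm) / (2 * Δx)) * (x - xj)
      + ((ubp - 2 * ub + ubm) / Δx ^ 2) * (x - xj) ^ 2) :
    ((∫ x in (xj - Δx / 2)..(xj + Δx / 2), Δx ^ (2 * 1 - 1) * (deriv PC x) ^ 2)
      + ∫ x in (xj - Δx / 2)..(xj + Δx / 2),
          Δx ^ (2 * 2 - 1) * (deriv (deriv PC) x) ^ 2)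
      = (13 / 3) * (ubp - 2 * ub + ubm) ^ 2 + (1 / 4) * (ubp - ubm) ^ 2 := by
  set a := (ubp - ubm) / (2 * Δx) with ha
  set b := (ubp - 2 * ub + ubm) / Δx ^ 2 with hb
  have hPCfun : PC = fun x => (ub - (1 / 12) * (ubp - 2 * ub + ubm))
      + a * (x - xj) + b * (x - xj) ^ 2 := funext fun x => hPC x
  have hd1 : deriv PC = fun x => a + 2 * b * (x - xj) := by
    rw [hPCfun]; exact deriv_parabola _ a b xj
  have hd2 : deriv (deriv PC) = fun _ => 2 * b := by
    rw [hd1]; exact deriv_linear a b xj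
  rw [hd2, hd1]
  have hΔx' : Δx ≠ 0 := ne_of_gt hΔx
  -- first integral
  have hI1 : (∫ x in (xj - Δx / 2)..(xj + Δx / 2), Δx ^ (2 * 1 - 1) * (a + 2 * b * (x - xj)) ^ 2)
      = Δx * ∫ t in (-(Δx / 2))..(Δx / 2), (a + 2 * b * t) ^ 2 := by
    have h := intervalIntegral.integral_comp_sub_right
      (fun t => Δx * (a + 2 * b * t) ^ 2) xj (a := xj - Δx / 2) (b := xj + Δx / 2)
    have e1 : xj - Δx / 2 - xj = -(Δx / 2) := by ring
    have e2 : xj + Δx / 2 - xj = Δx / 2 := by ring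
    rw [e1, e2] at h
    rw [← intervalIntegral.integral_const_mul, ← h]
    norm_num
  have hI2 : (∫ x in (xj - Δx / 2)..(xj + Δx / 2), Δx ^ (2 * 2 - 1) * ((fun _ : ℝ => 2 * b) x) ^ 2)
      = Δx ^ 3 * ((2 * b) ^ 2) * Δx := by
    have e : (xj + Δx / 2) - (xj - Δx / 2) = Δx := by ring
    rw [intervalIntegral.integral_const, e, smul_eq_mul]
    ring
  rw [hI1, hI2, integral_sq_linear a b (Δx / 2)]
  have key : Δx * (2 * a ^ 2 * (Δx / 2) + 8 / 3 * b ^ 2 * (Δx / 2) ^ 3)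
      + Δx ^ 3 * (2 * b) ^ 2 * Δx
      = a ^ 2 * Δx ^ 2 + (13 / 3) * b ^ 2 * Δx ^ 4 := by ring
  rw [key, ha, hb]
  field_simp
  ring
end

section
/- Let u : ℝ → ℝ be five times continuously differentiable and let x ∈ ℝ. Then (1/(12h))[3u(x+2h) + 10u(x+h) − 18u(x) + 6u(x−h) − u(x−2h)] − u′(x+h) = O(h⁴) as h → 0; that is, there exist constants C > 0 and δ > 0 such that for all h with 0 < |h| < δ, |(1/(12h))[3u(x+2h) + 10u(x+h) − 18u(x) + 6u(x−h) − u(x−2h)] − u′(x+h)| ≤ C h⁴. -/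
open Set

/-- Mean-value chaining: if `g 0 = 0` and `|g'| ≤ K|s|^m` near `0`, then `|g t| ≤ K|t|^(m+1)`. -/
lemma chain_bound {g g' : ℝ → ℝ} {K : ℝ} {m : ℕ} (hK : 0 ≤ K)
    (hg : ∀ s, HasDerivAt g (g' s) s) (h0 : g 0 = 0)
    (hb : ∀ s : ℝ, |s| ≤ 1 → |g' s| ≤ K * |s| ^ m) :
    ∀ t : ℝ, |t| ≤ 1 → |g t| ≤ K * |t| ^ (m + 1) := by
  intro t ht
  have hmem0 : (0 : ℝ) ∈ Icc (-|t|) |t| := ⟨neg_nonpos.mpr (abs_nonneg t), abs_nonneg t⟩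
  have hmemt : t ∈ Icc (-|t|) |t| := ⟨neg_abs_le t, le_abs_self t⟩
  have hmvt := Convex.norm_image_sub_le_of_norm_hasDerivWithin_le
    (f := g) (f' := g') (s := Icc (-|t|) |t|) (C := K * |t| ^ m)
    (fun s _ => (hg s).hasDerivWithinAt)
    (fun s hs => by
      have h1 : |s| ≤ |t| := abs_le.mpr ⟨hs.1, hs.2⟩
      have h2 : |g' s| ≤ K * |s| ^ m := hb s (h1.trans ht)
      have h3 : |s| ^ m ≤ |t| ^ m := pow_le_pow_left₀ (abs_nonneg s) h1 m
      calc ‖g' s‖ = |g' s| := rfl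
        _ ≤ K * |s| ^ m := h2
        _ ≤ K * |t| ^ m := mul_le_mul_of_nonneg_left h3 hK)
    (convex_Icc _ _) hmem0 hmemt
  have : |g t| ≤ K * |t| ^ m * |t| := by
    simpa [h0, Real.norm_eq_abs] using hmvt
  calc |g t| ≤ K * |t| ^ m * |t| := this
    _ = K * |t| ^ (m + 1) := by ring

/-- The finite-difference formula
`(u_x)_{j+1,j} = (3u_{j+2} + 10u_{j+1} − 18u_j + 6u_{j−1} − u_{j−2})/(12Δx)`
approximates `u′` at `x + h` to fourth order for `u ∈ C⁵`. -/
theorem stmt_15 (u : ℝ → ℝ) (hu : ContDiff ℝ 5 u) (x : ℝ) :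
    ∃ C > (0 : ℝ), ∃ δ > (0 : ℝ), ∀ h : ℝ, 0 < |h| → |h| < δ →
      |(1 / (12 * h)) * (3 * u (x + 2 * h) + 10 * u (x + h) - 18 * u x
          + 6 * u (x - h) - u (x - 2 * h))
        - deriv u (x + h)| ≤ C * h ^ 4 := by
  set d : ℕ → ℝ → ℝ := fun n => iteratedDeriv n u with hd_def
  have hderiv : ∀ n : ℕ, n < 5 → ∀ y : ℝ, HasDerivAt (d n) (d (n + 1) y) y := by
    intro n hn y
    have h1 : Differentiable ℝ (d n) :=
      hu.differentiable_iteratedDeriv n (by exact_mod_cast hn)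
    have h2 := (h1 y).hasDerivAt
    have h3 : d (n + 1) y = deriv (d n) y := by
      simp only [hd_def, iteratedDeriv_succ]
    rw [h3]; exact h2
  have hcomp : ∀ n : ℕ, n < 5 → ∀ a t : ℝ,
      HasDerivAt (fun s => d n (x + a * s)) (a * d (n + 1) (x + a * t)) t := by
    intro n hn a t
    have h1 : HasDerivAt (fun s : ℝ => x + a * s) a t := by
      simpa using ((hasDerivAt_id t).const_mul a).const_add x
    have h2 := (hderiv n hn (x + a * t)).comp t h1
    simpa [Function.comp_def, mul_comm] using h2
  set F : ℕ → ℝ → ℝ := fun n t =>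
    3 * 2 ^ n * d n (x + 2 * t) + 10 * d n (x + 1 * t) + 6 * (-1) ^ n * d n (x + (-1) * t)
      - (-2) ^ n * d n (x + (-2) * t) - 12 * (n : ℝ) * d n (x + 1 * t)
      - 12 * (t * d (n + 1) (x + 1 * t)) with hF_def
  have hF : ∀ n : ℕ, n < 4 → ∀ t : ℝ, HasDerivAt (F n) (F (n + 1) t) t := by
    intro n hn t
    have h2 := hcomp n (by omega) 2 t
    have h1 := hcomp n (by omega) 1 t
    have hm1 := hcomp n (by omega) (-1) t
    have hm2 := hcomp n (by omega) (-2) t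
    have hp : HasDerivAt (fun s : ℝ => s * d (n + 1) (x + 1 * s))
        (1 * d (n + 1) (x + 1 * t) + t * (1 * d (n + 2) (x + 1 * t))) t :=
      (hasDerivAt_id t).mul (hcomp (n + 1) (by omega) 1 t)
    have hsum := (((((h2.const_mul ((3 : ℝ) * 2 ^ n)).add (h1.const_mul (10 : ℝ))).add
      (hm1.const_mul ((6 : ℝ) * (-1) ^ n))).sub (hm2.const_mul (((-2) : ℝ) ^ n))).sub
      (h1.const_mul ((12 : ℝ) * n))).sub (hp.const_mul (12 : ℝ))
    have heq : F (n + 1) t =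
        3 * 2 ^ n * (2 * d (n + 1) (x + 2 * t)) + 10 * (1 * d (n + 1) (x + 1 * t))
          + 6 * (-1) ^ n * (-1 * d (n + 1) (x + -1 * t))
          - (-2) ^ n * (-2 * d (n + 1) (x + -2 * t))
          - 12 * (n : ℝ) * (1 * d (n + 1) (x + 1 * t))
          - 12 * (1 * d (n + 1) (x + 1 * t) + t * (1 * d (n + 1 + 1) (x + 1 * t))) := by
      simp only [hF_def]
      push_cast [pow_succ]
      ring
    rw [heq]
    exact hsum
  -- bound on the fifth derivative on a compact interval
  obtain ⟨M0, hM0⟩ := (isCompact_Icc (a := x - 2) (b := x + 2)).exists_bound_of_continuousOn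
    ((hu.continuous_iteratedDeriv 5 le_rfl).continuousOn)
  set M : ℝ := |M0| + 1 with hM_def
  have hM : ∀ y ∈ Icc (x - 2) (x + 2), |d 5 y| ≤ M := by
    intro y hy
    have := hM0 y hy
    have h2 : M0 ≤ M := by
      simp only [hM_def]
      nlinarith [le_abs_self M0, abs_nonneg M0]
    calc |d 5 y| = ‖iteratedDeriv 5 u y‖ := by simp [hd_def]
      _ ≤ M0 := this
      _ ≤ M := h2
  have hMpos : 0 < M := by positivity
  -- MVT for the fourth derivative
  have hMVT4 : ∀ y ∈ Icc (x - 2) (x + 2), |d 4 y - d 4 x| ≤ M * |y - x| := by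
    intro y hy
    have hxmem : x ∈ Icc (x - 2) (x + 2) := ⟨by linarith, by linarith⟩
    have := Convex.norm_image_sub_le_of_norm_hasDerivWithin_le
      (f := d 4) (f' := d 5) (s := Icc (x - 2) (x + 2)) (C := M)
      (fun z _ => (hderiv 4 (by norm_num) z).hasDerivWithinAt)
      (fun z hz => hM z hz) (convex_Icc _ _) hxmem hy
    simpa [Real.norm_eq_abs] using this
  set K : ℝ := 184 * M with hK_def
  have hKpos : 0 < K := by positivity
  have hB4 : ∀ t : ℝ, |t| ≤ 1 → |F 4 t| ≤ K * |t| ^ 1 := by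
    intro t ht
    obtain ⟨ht1, ht2⟩ := abs_le.mp ht
    have m2 : x + 2 * t ∈ Icc (x - 2) (x + 2) := ⟨by linarith, by linarith⟩
    have m1 : x + 1 * t ∈ Icc (x - 2) (x + 2) := ⟨by linarith, by linarith⟩
    have mn1 : x + (-1) * t ∈ Icc (x - 2) (x + 2) := ⟨by linarith, by linarith⟩
    have mn2 : x + (-2) * t ∈ Icc (x - 2) (x + 2) := ⟨by linarith, by linarith⟩
    have e2 : |d 4 (x + 2 * t) - d 4 x| ≤ M * (2 * |t|) := by
      have := hMVT4 _ m2
      calc |d 4 (x + 2 * t) - d 4 x| ≤ M * |x + 2 * t - x| := this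
        _ = M * (2 * |t|) := by rw [show x + 2 * t - x = 2 * t by ring, abs_mul]; norm_num
    have e1 : |d 4 (x + 1 * t) - d 4 x| ≤ M * |t| := by
      have := hMVT4 _ m1
      calc |d 4 (x + 1 * t) - d 4 x| ≤ M * |x + 1 * t - x| := this
        _ = M * |t| := by rw [show x + 1 * t - x = t by ring]
    have en1 : |d 4 (x + (-1) * t) - d 4 x| ≤ M * |t| := by
      have := hMVT4 _ mn1
      calc |d 4 (x + (-1) * t) - d 4 x| ≤ M * |x + (-1) * t - x| := this
        _ = M * |t| := by rw [show x + (-1) * t - x = -t by ring, abs_neg]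
    have en2 : |d 4 (x + (-2) * t) - d 4 x| ≤ M * (2 * |t|) := by
      have := hMVT4 _ mn2
      calc |d 4 (x + (-2) * t) - d 4 x| ≤ M * |x + (-2) * t - x| := this
        _ = M * (2 * |t|) := by
            rw [show x + (-2) * t - x = -(2 * t) by ring, abs_neg, abs_mul]; norm_num
    have ep : |t * d 5 (x + 1 * t)| ≤ |t| * M := by
      rw [abs_mul]
      exact mul_le_mul_of_nonneg_left (hM _ m1) (abs_nonneg t)
    have hFeq : F 4 t = 48 * (d 4 (x + 2 * t) - d 4 x) - 38 * (d 4 (x + 1 * t) - d 4 x)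
        + 6 * (d 4 (x + (-1) * t) - d 4 x) - 16 * (d 4 (x + (-2) * t) - d 4 x)
        - 12 * (t * d 5 (x + 1 * t)) := by
      simp only [hF_def]
      norm_num
      ring
    rw [hFeq, hK_def, pow_one]
    have a2 := abs_le.mp e2
    have a1 := abs_le.mp e1
    have an1 := abs_le.mp en1
    have an2 := abs_le.mp en2
    have ap := abs_le.mp ep
    rw [abs_le]
    constructor <;> nlinarith [abs_nonneg t, hMpos.le]
  -- chain the bounds downward
  have hF0zero : ∀ n : ℕ, 1 ≤ n → n ≤ 4 → F n 0 = 0 := by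
    intro n h1 h4
    interval_cases n <;> (simp only [hF_def]; norm_num; try ring)
  have hB3 : ∀ t : ℝ, |t| ≤ 1 → |F 3 t| ≤ K * |t| ^ 2 :=
    chain_bound hKpos.le (fun s => hF 3 (by norm_num) s)
      (hF0zero 3 (by norm_num) (by norm_num)) hB4
  have hB2 : ∀ t : ℝ, |t| ≤ 1 → |F 2 t| ≤ K * |t| ^ 3 :=
    chain_bound hKpos.le (fun s => hF 2 (by norm_num) s)
      (hF0zero 2 (by norm_num) (by norm_num)) hB3
  have hB1 : ∀ t : ℝ, |t| ≤ 1 → |F 1 t| ≤ K * |t| ^ 4 :=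
    chain_bound hKpos.le (fun s => hF 1 (by norm_num) s)
      (hF0zero 1 (by norm_num) (by norm_num)) hB2
  have hB0 : ∀ t : ℝ, |t| ≤ 1 → |F 0 t - F 0 0| ≤ K * |t| ^ 5 :=
    chain_bound hKpos.le (fun s => (hF 0 (by norm_num) s).sub_const (F 0 0))
      (by simp) hB1
  refine ⟨(K + 1) / 12, by positivity, 1, one_pos, fun h hh0 hh1 => ?_⟩
  have hne : h ≠ 0 := abs_pos.mp hh0
  have heq : (1 / (12 * h)) * (3 * u (x + 2 * h) + 10 * u (x + h) - 18 * u x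
        + 6 * u (x - h) - u (x - 2 * h)) - deriv u (x + h)
      = (F 0 h - F 0 0) / (12 * h) := by
    simp only [hF_def, hd_def, iteratedDeriv_zero, iteratedDeriv_one]
    field_simp
    rw [iteratedDeriv_one]
    ring
  rw [heq]
  have hb := hB0 h hh1.le
  rw [abs_div, abs_mul]
  rw [div_le_iff₀ (by positivity : (0:ℝ) < |(12:ℝ)| * |h|)]
  have h4 : |h| ^ 4 = h ^ 4 := by
    rw [pow_abs, abs_of_nonneg (by positivity)]
  have h12 : |(12:ℝ)| = 12 := by norm_num
  calc |F 0 h - F 0 0| ≤ K * |h| ^ 5 := hb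
    _ ≤ (K + 1) * |h| ^ 5 := by nlinarith [pow_nonneg (abs_nonneg h) 5]
    _ = (K + 1) / 12 * |h| ^ 4 * (12 * |h|) := by ring
    _ = (K + 1) / 12 * h ^ 4 * (|(12:ℝ)| * |h|) := by rw [h4, h12]
end

section
/- Let u : ℝ → ℝ be five times continuously differentiable and let x ∈ ℝ. Then (1/(12h))[25u(x+2h) − 48u(x+h) + 36u(x) − 16u(x−h) + 3u(x−2h)] − u′(x+2h) = O(h⁴) as h → 0; that is, there exist constants C > 0 and δ > 0 such that for all h with 0 < |h| < δ, |(1/(12h))[25u(x+2h) − 48u(x+h) + 36u(x) − 16u(x−h) + 3u(x−2h)] − u′(x+2h)| ≤ C h⁴. -/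
open Set Nat

private lemma iterEq {f : ℝ → ℝ} {n : ℕ} (hf : ContDiff ℝ (n : ℕ) f) {s : Set ℝ}
    (hs : UniqueDiffOn ℝ s) :
    ∀ k : ℕ, k ≤ n → ∀ x ∈ s, iteratedDerivWithin k f s x = iteratedDeriv k f x := by
  intro k
  induction k with
  | zero => intro _ x _; simp
  | succ k ih =>
    intro hk x hx
    rw [iteratedDerivWithin_succ, iteratedDeriv_succ,
      derivWithin_congr (fun y hy => ih (Nat.le_of_succ_le hk) y hy)
        (ih (Nat.le_of_succ_le hk) x hx)]
    exact ((hf.differentiable_iteratedDeriv k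
      (by exact_mod_cast Nat.lt_of_succ_le hk)) x).derivWithin (hs x hx)

private lemma taylorBound {n : ℕ} {u : ℝ → ℝ} (hu : ContDiff ℝ ((n + 1 : ℕ)) u) {p M : ℝ}
    (hM : ∀ y ∈ Icc (p - 2) (p + 2), |iteratedDeriv (n + 1) u y| ≤ M)
    {v : ℝ} (hv : |v| ≤ 2) :
    |u (p + v) - ∑ k ∈ Finset.range (n + 1), v ^ k / (k ! : ℝ) * iteratedDeriv k u p|
      ≤ M * |v| ^ (n + 1) := by
  have hM0 : 0 ≤ M := le_trans (abs_nonneg _) (hM p (by constructor <;> linarith))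
  set F : ℝ → ℝ := fun t => u (p + v * t) with hFdef
  have hF : ContDiff ℝ ((n + 1 : ℕ)) F :=
    hu.comp (contDiff_const.add (contDiff_const.mul contDiff_id))
  have hiter : ∀ k : ℕ, k ≤ n + 1 → ∀ t : ℝ,
      iteratedDeriv k F t = v ^ k * iteratedDeriv k u (p + v * t) := by
    intro k hk t
    have hg : ContDiff ℝ (k : ℕ) (fun z : ℝ => u (p + z)) :=
      (hu.of_le (by exact_mod_cast hk)).comp (contDiff_const.add contDiff_id)
    have h1 : iteratedDeriv k F t
        = v ^ k * iteratedDeriv k (fun z : ℝ => u (p + z)) (v * t) :=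
      congrFun (iteratedDeriv_comp_const_mul hg v) t
    rw [h1, iteratedDeriv_comp_const_add]
  have huniq : UniqueDiffOn ℝ (Icc (0:ℝ) 1) := uniqueDiffOn_Icc (by norm_num)
  have hbound := taylor_mean_remainder_bound (n := n) (a := (0:ℝ)) (b := 1) (x := 1)
    (f := F) (C := M * |v| ^ (n + 1)) (by norm_num)
    (hF.contDiffOn) (by norm_num)
    (by
      intro y hy
      rw [Real.norm_eq_abs, iterEq hF huniq (n + 1) le_rfl y hy, hiter (n + 1) le_rfl y,
        abs_mul, abs_pow]
      have hmem : p + v * y ∈ Icc (p - 2) (p + 2) := by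
        obtain ⟨hy0, hy1⟩ := hy
        have h1 : |v * y| ≤ 2 := by
          rw [abs_mul]
          calc |v| * |y| ≤ 2 * 1 := by
                apply mul_le_mul hv _ (abs_nonneg _) (by norm_num)
                rw [abs_of_nonneg hy0]; exact hy1
            _ = 2 := by norm_num
        rw [abs_le] at h1
        constructor <;> linarith [h1.1, h1.2]
      calc |v| ^ (n + 1) * |iteratedDeriv (n + 1) u (p + v * y)|
          ≤ |v| ^ (n + 1) * M := by
            apply mul_le_mul_of_nonneg_left (hM _ hmem) (by positivity)
        _ = M * |v| ^ (n + 1) := mul_comm _ _)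
  have hsum : taylorWithinEval F n (Icc (0:ℝ) 1) 0 1
      = ∑ k ∈ Finset.range (n + 1), v ^ k / (k ! : ℝ) * iteratedDeriv k u p := by
    rw [taylor_within_apply]
    refine Finset.sum_congr rfl fun k hk => ?_
    rw [iterEq hF huniq k (le_of_lt (Finset.mem_range.mp hk)) 0
        (by constructor <;> norm_num),
      hiter k (le_of_lt (Finset.mem_range.mp hk)) 0]
    rw [mul_zero, add_zero]
    rw [smul_eq_mul]
    ring
  have hF1 : F 1 = u (p + v) := by rw [hFdef]; simp
  rw [Real.norm_eq_abs, hsum, hF1] at hbound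
  calc |u (p + v) - ∑ k ∈ Finset.range (n + 1), v ^ k / (k ! : ℝ) * iteratedDeriv k u p|
      ≤ M * |v| ^ (n + 1) * (1 - 0) ^ (n + 1) / (n ! : ℝ) := hbound
    _ = (M * |v| ^ (n + 1)) / (n ! : ℝ) := by norm_num
    _ ≤ M * |v| ^ (n + 1) := div_le_self (by positivity)
        (by exact_mod_cast Nat.one_le_iff_ne_zero.mpr n.factorial_ne_zero)

set_option maxHeartbeats 1000000 in
/-- The one-sided finite-difference formula
`(u_x)_{j+2,j} = (25u_{j+2} − 48u_{j+1} + 36u_j − 16u_{j−1} + 3u_{j−2})/(12Δx)`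
approximates `u′` at `x + 2h` to fourth order for `u ∈ C⁵`. -/
theorem stmt_16 (u : ℝ → ℝ) (hu : ContDiff ℝ 5 u) (x : ℝ) :
    ∃ C > (0 : ℝ), ∃ δ > (0 : ℝ), ∀ h : ℝ, 0 < |h| → |h| < δ →
      |(1 / (12 * h)) * (25 * u (x + 2 * h) - 48 * u (x + h) + 36 * u x
          - 16 * u (x - h) + 3 * u (x - 2 * h))
        - deriv u (x + 2 * h)| ≤ C * h ^ 4 := by
  have hu5 : ContDiff ℝ ((4 + 1 : ℕ)) u := by exact_mod_cast hu
  have hud : ContDiff ℝ ((3 + 1 : ℕ)) (deriv u) := by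
    have h5 : ContDiff ℝ ((4 : WithTop ℕ∞) + 1) u := by exact_mod_cast hu
    exact_mod_cast (contDiff_succ_iff_deriv.mp h5).2.2
  obtain ⟨M, hM⟩ : ∃ M, ∀ y ∈ Set.Icc (x - 2) (x + 2), |iteratedDeriv 5 u y| ≤ M := by
    obtain ⟨M, hM⟩ := isCompact_Icc.exists_bound_of_continuousOn
      (f := iteratedDeriv 5 u) (hu.continuous_iteratedDeriv 5 (by norm_num)).continuousOn
    exact ⟨M, fun y hy => hM y hy⟩
  have hM0 : 0 ≤ M := le_trans (abs_nonneg _) (hM x (by constructor <;> linarith))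
  have hMd : ∀ y ∈ Set.Icc (x - 2) (x + 2), |iteratedDeriv (3 + 1) (deriv u) y| ≤ M := by
    intro y hy
    have heq : iteratedDeriv (3 + 1) (deriv u) y = iteratedDeriv 5 u y := by
      rw [← iteratedDeriv_succ' (n := 3 + 1) (f := u)]
    rw [heq]; exact hM y hy
  refine ⟨96 * M + 1, by positivity, 1, one_pos, ?_⟩
  intro h hh0 hh1
  have hne : h ≠ 0 := abs_pos.mp hh0
  have habs2 : |2 * h| ≤ 2 := by rw [abs_mul, abs_two]; nlinarith
  have habs1 : |h| ≤ 2 := by linarith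
  have habsn1 : |(-h)| ≤ 2 := by rw [abs_neg]; linarith
  have habsn2 : |(-(2 * h))| ≤ 2 := by rw [abs_neg]; exact habs2
  have e2 := taylorBound hu5 hM habs2
  have e1 := taylorBound hu5 hM habs1
  have em1 := taylorBound hu5 hM habsn1
  have em2 := taylorBound hu5 hM habsn2
  have ed := taylorBound hud hMd habs2
  rw [show x + -h = x - h by ring] at em1
  rw [show x + -(2 * h) = x - 2 * h by ring] at em2
  obtain ⟨A2, hA2e, hA2b⟩ : ∃ a : ℝ, u (x + 2 * h) = (∑ k ∈ Finset.range (4 + 1),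
      (2 * h) ^ k / (k ! : ℝ) * iteratedDeriv k u x) + a ∧ |a| ≤ 32 * M * |h| ^ 5 :=
    ⟨_, by ring, le_trans e2 (le_of_eq (by rw [abs_mul, abs_two]; try ring))⟩
  obtain ⟨A1, hA1e, hA1b⟩ : ∃ a : ℝ, u (x + h) = (∑ k ∈ Finset.range (4 + 1),
      h ^ k / (k ! : ℝ) * iteratedDeriv k u x) + a ∧ |a| ≤ M * |h| ^ 5 :=
    ⟨_, by ring, le_trans e1 (le_of_eq (by try ring))⟩
  obtain ⟨Am1, hAm1e, hAm1b⟩ : ∃ a : ℝ, u (x - h) = (∑ k ∈ Finset.range (4 + 1),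
      (-h) ^ k / (k ! : ℝ) * iteratedDeriv k u x) + a ∧ |a| ≤ M * |h| ^ 5 :=
    ⟨_, by ring, le_trans em1 (le_of_eq (by rw [abs_neg]; try ring))⟩
  obtain ⟨Am2, hAm2e, hAm2b⟩ : ∃ a : ℝ, u (x - 2 * h) = (∑ k ∈ Finset.range (4 + 1),
      (-(2 * h)) ^ k / (k ! : ℝ) * iteratedDeriv k u x) + a ∧ |a| ≤ 32 * M * |h| ^ 5 :=
    ⟨_, by ring, le_trans em2 (le_of_eq (by rw [abs_neg, abs_mul, abs_two]; try ring))⟩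
  obtain ⟨D, hDe, hDb⟩ : ∃ a : ℝ, deriv u (x + 2 * h) = (∑ k ∈ Finset.range (3 + 1),
      (2 * h) ^ k / (k ! : ℝ) * iteratedDeriv k (deriv u) x) + a ∧ |a| ≤ 16 * M * |h| ^ 4 :=
    ⟨_, by ring, le_trans ed (le_of_eq (by rw [abs_mul, abs_two]; try ring))⟩
  have hder : ∀ k : ℕ, iteratedDeriv k (deriv u) x = iteratedDeriv (k + 1) u x :=
    fun k => (congrFun (iteratedDeriv_succ' (n := k) (f := u)) x).symm
  have hkey : 12 * h * ((1 / (12 * h)) * (25 * u (x + 2 * h) - 48 * u (x + h) + 36 * u x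
          - 16 * u (x - h) + 3 * u (x - 2 * h)) - deriv u (x + 2 * h))
      = 25 * A2 - 48 * A1 - 16 * Am1 + 3 * Am2 - 12 * h * D := by
    rw [hA2e, hA1e, hAm1e, hAm2e, hDe]
    simp only [Finset.sum_range_succ, Finset.sum_range_zero, hder]
    norm_num [Nat.factorial]
    field_simp
    ring
  have tri : |25 * A2 - 48 * A1 - 16 * Am1 + 3 * Am2 - 12 * h * D|
      ≤ 25 * |A2| + 48 * |A1| + 16 * |Am1| + 3 * |Am2| + |12 * h * D| := by
    rw [abs_le]
    constructor <;>
      linarith [le_abs_self A2, neg_abs_le A2, le_abs_self A1, neg_abs_le A1,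
        le_abs_self Am1, neg_abs_le Am1, le_abs_self Am2, neg_abs_le Am2,
        le_abs_self (12 * h * D), neg_abs_le (12 * h * D)]
  have hhd : |12 * h * D| = 12 * |h| * |D| := by
    rw [abs_mul, abs_mul]; norm_num
  have hDD : 12 * |h| * |D| ≤ 192 * M * |h| ^ 5 := by
    have h5 : |h| ^ 5 = |h| * |h| ^ 4 := by ring
    nlinarith [abs_nonneg h, abs_nonneg D]
  have hbig : |25 * A2 - 48 * A1 - 16 * Am1 + 3 * Am2 - 12 * h * D|
      ≤ 1152 * M * |h| ^ 5 := by
    rw [hhd] at tri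
    nlinarith [abs_nonneg h]
  have hfin : |(1 / (12 * h)) * (25 * u (x + 2 * h) - 48 * u (x + h) + 36 * u x
          - 16 * u (x - h) + 3 * u (x - 2 * h)) - deriv u (x + 2 * h)|
      ≤ 96 * M * |h| ^ 4 := by
    have hpos : (0 : ℝ) < 12 * |h| := by linarith
    refine le_of_mul_le_mul_left ?_ hpos
    calc 12 * |h| * |(1 / (12 * h)) * (25 * u (x + 2 * h) - 48 * u (x + h) + 36 * u x
          - 16 * u (x - h) + 3 * u (x - 2 * h)) - deriv u (x + 2 * h)|
        = |12 * h * ((1 / (12 * h)) * (25 * u (x + 2 * h) - 48 * u (x + h) + 36 * u x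
          - 16 * u (x - h) + 3 * u (x - 2 * h)) - deriv u (x + 2 * h))| := by
          rw [abs_mul, abs_mul]; norm_num
      _ = |25 * A2 - 48 * A1 - 16 * Am1 + 3 * Am2 - 12 * h * D| := by rw [hkey]
      _ ≤ 1152 * M * |h| ^ 5 := hbig
      _ = 12 * |h| * (96 * M * |h| ^ 4) := by ring
  have h4 : |h| ^ 4 = h ^ 4 := by rw [← abs_pow]; exact abs_of_nonneg (by positivity)
  rw [h4] at hfin
  nlinarith [pow_nonneg (abs_nonneg h) 4, h4, hfin]
end
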